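/- If a two-column root configuration ĈC' satisfies the Non-overlapping Condition (the pivot intervals [b_j,d_j] are pairwise disjoint), then for any σ ∈ A(β) with σ.ĈC' an HHL filling, every disjoint cycle of σ, viewed as a permutation of the entries of Ĉ, contains exactly one pivot entry. -/

import Mathlib

/-- Two-column HHL filling condition. -/
def HHL2 (c c' : ℕ) (C : Fin c → ℕ) (C' : Fin c' → ℕ) : Prop :=
  Function.Injective C ∧ Function.Injective C' ∧
  (∀ (i : Fin c) (k : Fin c'), (k : ℕ) < (i : ℕ) → C i ≠ C' k) ∧
  (∀ (i : Fin c) (h : (i : ℕ) < c'), C i ≤ C' ⟨i, h⟩)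

/-- Row `i` is a pivot row of the two-column configuration `CC'`:
either the left entry is strictly smaller than the right entry, or the row
lies below the bottom of the right column. -/
def PivotRow (c c' : ℕ) (C : Fin c → ℕ) (C' : Fin c' → ℕ) (i : Fin c) : Prop :=
  c' ≤ (i : ℕ) ∨ ∃ h : (i : ℕ) < c', C i < C' ⟨i, h⟩

/-- The set of pivot entries of the left column. -/
def pivotEntries (c c' : ℕ) (C : Fin c → ℕ) (C' : Fin c' → ℕ) : Set ℕ :=
  {x | ∃ i : Fin c, PivotRow c c' C C' i ∧ C i = x}

/-- Failure of the Non-overlapping Condition: two distinct pivot rows whose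
pivot intervals `[b_j, d_j]` (with `d_j = ∞` when the right entry is absent)
intersect. -/
def Overlap (c c' : ℕ) (C : Fin c → ℕ) (C' : Fin c' → ℕ) : Prop :=
  ∃ i j : Fin c, i ≠ j ∧ PivotRow c c' C C' i ∧ PivotRow c c' C C' j ∧
    ∃ z : ℕ, C i ≤ z ∧ (∀ h : (i : ℕ) < c', z ≤ C' ⟨i, h⟩) ∧
      C j ≤ z ∧ (∀ h : (j : ℕ) < c', z ≤ C' ⟨j, h⟩)

section Aux

variable {c c' : ℕ} {C' : Fin c' → ℕ} {Croot : Fin c → ℕ} {σ : Equiv.Perm (Fin c)}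

/-- A non-pivot row lies in the range of the right column and its left entry
equals its right entry. -/
lemma nonpivot_spec (hroot : HHL2 c c' Croot C') {j : Fin c}
    (h : ¬ PivotRow c c' Croot C' j) :
    ∃ hj : (j : ℕ) < c', Croot j = C' ⟨(j : ℕ), hj⟩ := by
  simp only [PivotRow, not_or, not_le, not_exists, not_lt] at h
  exact ⟨h.1, le_antisymm (hroot.2.2.2 j h.1) (h.2 h.1)⟩

/-- If `σ` moves row `r` and `σ r` is a non-pivot row, then `r < σ r`. -/
lemma step_lt (hroot : HHL2 c c' Croot C')
    (hC : HHL2 c c' (Croot ∘ σ) C') {r : Fin c}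
    (hmove : σ r ≠ r) (hnp : ¬ PivotRow c c' Croot C' (σ r)) :
    (r : ℕ) < ((σ r : Fin c) : ℕ) := by
  obtain ⟨hj, heq⟩ := nonpivot_spec hroot hnp
  rcases lt_trichotomy ((σ r : Fin c) : ℕ) (r : ℕ) with hlt | heq2 | hgt
  · exact absurd heq (hC.2.2.1 r ⟨((σ r : Fin c) : ℕ), hj⟩ hlt)
  · exact absurd (Fin.ext heq2) hmove
  · exact hgt

/-- Chain lemma: if all intermediate rows `σ^t p` (for `1 ≤ t < k`) are
non-pivot, then the entry `Croot (σ^k p)` is at most `C' p`. -/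
lemma chainS (hroot : HHL2 c c' Croot C')
    (hC : HHL2 c c' (Croot ∘ σ) C') :
    ∀ k : ℕ, 1 ≤ k → ∀ (p : Fin c) (hp : (p : ℕ) < c'),
      (∀ t, 1 ≤ t → t < k → ¬ PivotRow c c' Croot C' ((σ ^ t) p)) →
      Croot ((σ ^ k) p) ≤ C' ⟨(p : ℕ), hp⟩ := by
  intro k
  induction k with
  | zero => omega
  | succ k ih =>
    intro _ p hp hint
    rcases Nat.eq_zero_or_pos k with hk0 | hk1
    · subst hk0
      simpa using hC.2.2.2 p hp
    · have hjnp : ¬ PivotRow c c' Croot C' ((σ ^ k) p) :=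
        hint k hk1 (Nat.lt_succ_self k)
      obtain ⟨hj, heqj⟩ := nonpivot_spec hroot hjnp
      have hIH : Croot ((σ ^ k) p) ≤ C' ⟨(p : ℕ), hp⟩ :=
        ih hk1 p hp (fun t ht1 htk => hint t ht1 (htk.trans (Nat.lt_succ_self k)))
      have hstep : Croot ((σ ^ (k + 1)) p) ≤ C' ⟨(((σ ^ k) p : Fin c) : ℕ), hj⟩ := by
        have h1 : (σ ^ (k + 1)) p = σ ((σ ^ k) p) := by
          rw [pow_succ']; rfl
        rw [h1]
        exact hC.2.2.2 ((σ ^ k) p) hj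
      calc Croot ((σ ^ (k + 1)) p) ≤ C' ⟨(((σ ^ k) p : Fin c) : ℕ), hj⟩ := hstep
        _ = Croot ((σ ^ k) p) := heqj.symm
        _ ≤ C' ⟨(p : ℕ), hp⟩ := hIH

/-- At most one pivot row per cycle, given the Non-overlapping Condition. -/
lemma at_most_one (hroot : HHL2 c c' Croot C')
    (hC : HHL2 c c' (Croot ∘ σ) C') (hno : ¬ Overlap c c' Croot C')
    {p q : Fin c} (hp : PivotRow c c' Croot C' p) (hq : PivotRow c c' Croot C' q)
    (hpq : p ≠ q) (hcyc : σ.SameCycle p q) : False := by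
  classical
  set S : Finset (Fin c) :=
    Finset.univ.filter (fun j => σ.SameCycle p j ∧ PivotRow c c' Croot C' j) with hS
  have hpS : p ∈ S := by
    simp [hS, Equiv.Perm.SameCycle.refl, hp]
  have hqS : q ∈ S := by simp [hS, hcyc, hq]
  obtain ⟨qs, hqsS, hmax⟩ := Finset.exists_max_image S Croot ⟨p, hpS⟩
  have hqs : PivotRow c c' Croot C' qs ∧ σ.SameCycle p qs := by
    have := Finset.mem_filter.mp hqsS
    exact ⟨this.2.2, this.2.1⟩
  -- there is a pivot row in the same cycle distinct from qs
  obtain ⟨r, hrS, hrne⟩ : ∃ r, r ∈ S ∧ r ≠ qs := by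
    by_cases h : p = qs
    · exact ⟨q, hqS, fun hh => hpq (h ▸ hh ▸ rfl)⟩
    · exact ⟨p, hpS, h⟩
  have hrpiv : PivotRow c c' Croot C' r := (Finset.mem_filter.mp hrS).2.2
  have hrcyc : σ.SameCycle p r := (Finset.mem_filter.mp hrS).2.1
  -- least k ≥ 1 with (σ⁻¹)^k qs a pivot row
  have hex : ∃ n : ℕ, 1 ≤ n ∧ PivotRow c c' Croot C' ((σ⁻¹ ^ n) qs) := by
    refine ⟨orderOf σ, orderOf_pos σ, ?_⟩
    have h1 : (σ⁻¹ ^ orderOf σ) = 1 := by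
      rw [inv_pow, pow_orderOf_eq_one]; simp
    rw [h1]
    exact hqs.1
  set k := Nat.find hex with hk
  obtain ⟨hk1, hkpiv⟩ := Nat.find_spec hex
  have hmin : ∀ t, t < k → ¬ (1 ≤ t ∧ PivotRow c c' Croot C' ((σ⁻¹ ^ t) qs)) :=
    fun t ht => Nat.find_min hex ht
  set ps : Fin c := (σ⁻¹ ^ k) qs with hps
  -- ps ≠ qs
  have hpsne : ps ≠ qs := by
    intro hfix
    -- r is reachable from qs by a positive power of σ⁻¹
    have hqr : σ⁻¹.SameCycle qs r :=
      Equiv.Perm.SameCycle.inv ((hqs.2.symm).trans hrcyc)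
    obtain ⟨m, hm1, _, hmr⟩ := hqr.exists_pow_eq''
    -- reduce m below k using (σ⁻¹)^k qs = qs
    have hred : ∀ m, 0 < m → (σ⁻¹ ^ m) qs = r → False := by
      intro m
      induction m using Nat.strong_induction_on with
      | _ m ihm =>
        intro hm0 hmr
        rcases lt_or_ge m k with hmk | hkm
        · exact hmin m hmk ⟨hm0, hmr ▸ hrpiv⟩
        · have hmk' : m - k < m := by omega
          have hsplit : (σ⁻¹ ^ m) qs = (σ⁻¹ ^ (m - k)) qs := by
            have hpow : (σ⁻¹ ^ m) = σ⁻¹ ^ (m - k) * σ⁻¹ ^ k := by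
              rw [← pow_add]; congr 1; omega
            rw [hpow, Equiv.Perm.mul_apply, ← hps, hfix]
          rcases Nat.eq_zero_or_pos (m - k) with h0 | hpos
          · rw [hsplit, h0] at hmr
            simp at hmr
            exact hrne hmr.symm
          · exact ihm (m - k) hmk' hpos (hsplit ▸ hmr)
    exact hred m hm1 hmr
  -- σ^k ps = qs
  have hback : (σ ^ k) ps = qs := by
    rw [hps, inv_pow]
    exact Equiv.apply_symm_apply (σ ^ k) qs
  -- intermediate rows are non-pivot
  have hint : ∀ t, 1 ≤ t → t < k → ¬ PivotRow c c' Croot C' ((σ ^ t) ps) := by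
    intro t ht1 htk
    have hcalc : (σ ^ t) ps = (σ⁻¹ ^ (k - t)) qs := by
      have h2 : (σ⁻¹ ^ k) = σ⁻¹ ^ t * σ⁻¹ ^ (k - t) := by
        rw [← pow_add]; congr 1; omega
      rw [hps, h2, Equiv.Perm.mul_apply, inv_pow σ t]
      exact Equiv.apply_symm_apply (σ ^ t) _
    rw [hcalc]
    intro hpiv
    exact hmin (k - t) (by omega) ⟨by omega, hpiv⟩
  -- ps is a pivot row in the same cycle
  have hpspiv : PivotRow c c' Croot C' ps := hkpiv
  have hpscyc : σ.SameCycle p ps := by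
    refine hqs.2.trans ⟨-(k : ℤ), ?_⟩
    rw [zpow_neg, zpow_natCast, ← inv_pow, hps]
  have hpsS : ps ∈ S := by simp [hS, hpscyc, hpspiv]
  -- build the overlap
  apply hno
  refine ⟨ps, qs, hpsne, hpspiv, hqs.1, Croot qs, hmax ps hpsS, ?_, le_refl _, ?_⟩
  · intro h
    rw [← hback]
    exact chainS hroot hC k hk1 ps h hint
  · intro h
    exact hroot.2.2.2 qs h

end Aux

/-- Lemma 4.2 (cycle structure): if the root configuration `Croot C'` satisfies
the Non-overlapping Condition, then for the (unique) permutation `σ` of the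
rows with `C = Croot ∘ σ` giving an HHL filling `CC'`, every nontrivial cycle
of `σ` contains exactly one pivot row. -/
theorem cycle_structure (c c' : ℕ) (hcc : c = c' ∨ c = c' + 1)
    (C' : Fin c' → ℕ) (Croot : Fin c → ℕ)
    (hroot : HHL2 c c' Croot C')
    (hmatch : ∀ (i : Fin c) (j : Fin c'), Croot i = C' j → (i : ℕ) = (j : ℕ))
    (horder : ∀ (i i' : Fin c) (hi : (i : ℕ) < c') (hi' : (i' : ℕ) < c'),
      (∀ j : Fin c', Croot i ≠ C' j) → (∀ j : Fin c', Croot i' ≠ C' j) →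
      (Croot i < Croot i' ↔ C' ⟨(i : ℕ), hi⟩ < C' ⟨(i' : ℕ), hi'⟩))
    (hbottom : ∀ i : Fin c, (i : ℕ) = c' →
      ∀ i' : Fin c, (∀ j : Fin c', Croot i' ≠ C' j) → Croot i' ≤ Croot i)
    (hno : ¬ Overlap c c' Croot C')
    (σ : Equiv.Perm (Fin c)) (hC : HHL2 c c' (Croot ∘ σ) C') :
    ∀ i : Fin c, σ i ≠ i →
      ∃! j : Fin c, σ.SameCycle i j ∧ σ j ≠ j ∧ PivotRow c c' Croot C' j := by
  intro i hi
  -- Existence of a pivot row in the cycle of i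
  have hex : ∃ j : Fin c, σ.SameCycle i j ∧ PivotRow c c' Croot C' j := by
    by_contra hno'
    push_neg at hno'
    have key : ∀ n : ℕ, 1 ≤ n → (i : ℕ) < (((σ ^ n) i : Fin c) : ℕ) := by
      intro n
      induction n with
      | zero => omega
      | succ n ihn =>
        intro _
        rcases Nat.eq_zero_or_pos n with h0 | hn1
        · subst h0
          have hnp : ¬ PivotRow c c' Croot C' (σ i) :=
            hno' (σ i) ⟨1, by simp⟩
          simpa using step_lt hroot hC hi hnp
        · have hIH := ihn hn1
          set r : Fin c := (σ ^ n) i with hr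
          have hmove : σ r ≠ r := by
            intro hh
            apply hi
            have h1 : σ ((σ ^ n) i) = (σ ^ n) (σ i) := by
              rw [← Equiv.Perm.mul_apply, ← Equiv.Perm.mul_apply, ← pow_succ, ← pow_succ']
            rw [hr, h1] at hh
            exact (σ ^ n).injective hh
          have hnp : ¬ PivotRow c c' Croot C' (σ r) := by
            apply hno'
            have hgoal : σ r = (σ ^ (n + 1)) i := by
              rw [hr, pow_succ']; rfl
            rw [hgoal]
            exact ⟨((n + 1 : ℕ) : ℤ), by rw [zpow_natCast]⟩
          have hlt := step_lt hroot hC hmove hnp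
          have h2 : σ r = (σ ^ (n + 1)) i := by
            rw [hr, pow_succ']; rfl
          rw [h2] at hlt
          omega
    have hord := key (orderOf σ) (orderOf_pos σ)
    rw [pow_orderOf_eq_one] at hord
    simp at hord
  obtain ⟨j, hcycj, hpivj⟩ := hex
  have hmovej : σ j ≠ j := fun hh => hi (hcycj.apply_eq_self_iff.mpr hh)
  refine ⟨j, ⟨hcycj, hmovej, hpivj⟩, ?_⟩
  rintro y ⟨hcy, _, hpy⟩
  by_contra hne
  exact at_most_one hroot hC hno hpy hpivj hne (hcy.symm.trans hcycj)
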